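/- arXiv:2401.13944 — 2 statements merged into one kernel-verified Lean document; each statement's English description precedes it below -/
import Mathlib

section
/- If f: R^n → R is convex and L-Lipschitz continuous, then its Gaussian smoothing f_μ(x) = E_u[f(x + μu)] with u ~ N(0, I_n) satisfies f(x) ≤ f_μ(x) ≤ f(x) + μL√n for every x and every μ > 0. -/
open MeasureTheory ProbabilityTheory Real Matrix

noncomputable def stdGaussian (d : ℕ) : Measure (EuclideanSpace ℝ (Fin d)) :=
  (Measure.pi fun _ : Fin d => gaussianReal 0 1).map (MeasurableEquiv.toLp 2 (Fin d → ℝ))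

namespace GaussAux

open Filter Asymptotics Set Finset
open scoped ENNReal NNReal

instance (n : ℕ) : IsProbabilityMeasure (stdGaussian n) := by
  unfold _root_.stdGaussian
  exact Measure.isProbabilityMeasure_map (MeasurableEquiv.toLp 2 (Fin n → ℝ)).measurable.aemeasurable

/- ### one-dimensional integrals -/

lemma integrable_exp_halfsq : Integrable fun x : ℝ => rexp (-2⁻¹ * x ^ 2) :=
  integrable_exp_neg_mul_sq (by norm_num)

lemma integrable_mul_exp_halfsq : Integrable fun x : ℝ => x * rexp (-2⁻¹ * x ^ 2) :=
  integrable_mul_exp_neg_mul_sq (by norm_num)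

lemma integrable_sq_mul_exp_halfsq : Integrable fun x : ℝ => x ^ 2 * rexp (-2⁻¹ * x ^ 2) := by
  have h := integrable_rpow_mul_exp_neg_mul_sq (by norm_num : (0:ℝ) < 2⁻¹)
    (s := 2) (by norm_num)
  refine h.congr (Filter.Eventually.of_forall fun x => ?_)
  have hx : x ^ (2:ℝ) = x ^ 2 := by
    rw [← Real.rpow_natCast x 2]; norm_num
  simp only [hx]

lemma integral_mul_exp_halfsq : ∫ x : ℝ, x * rexp (-2⁻¹ * x ^ 2) = 0 := by
  have h := integral_neg_eq_self (fun x : ℝ => x * rexp (-2⁻¹ * x ^ 2)) (volume : Measure ℝ)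
  simp only [neg_sq] at h
  rw [show (fun x : ℝ => -x * rexp (-2⁻¹ * x ^ 2))
      = fun x : ℝ => -(x * rexp (-2⁻¹ * x ^ 2)) from funext fun x => by ring,
    integral_neg] at h
  linarith

lemma tendsto_mul_exp_halfsq_atTop :
    Tendsto (fun y : ℝ => y * rexp (-2⁻¹ * y ^ 2)) atTop (nhds 0) := by
  have ho := rpow_mul_exp_neg_mul_sq_isLittleO_exp_neg (by norm_num : (0:ℝ) < 2⁻¹) 1
  have hexp : Tendsto (fun x : ℝ => rexp (-(1/2) * x)) atTop (nhds 0) := by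
    have h1 : Tendsto (fun x : ℝ => -(1/2) * x) atTop atBot :=
      tendsto_id.const_mul_atTop_of_neg (by norm_num)
    exact tendsto_exp_atBot.comp h1
  have h := ho.isBigO.trans_tendsto hexp
  simpa [Real.rpow_one] using h

lemma integral_sq_mul_exp_halfsq :
    ∫ x : ℝ, x ^ 2 * rexp (-2⁻¹ * x ^ 2) = Real.sqrt (2 * π) := by
  have hderiv : ∀ x : ℝ, HasDerivAt (fun y : ℝ => -y * rexp (-2⁻¹ * y ^ 2))
      (x ^ 2 * rexp (-2⁻¹ * x ^ 2) - rexp (-2⁻¹ * x ^ 2)) x := by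
    intro x
    have h1 : HasDerivAt (fun y : ℝ => -2⁻¹ * y ^ 2) (-2⁻¹ * (2 * x ^ 1)) x := by
      simpa using (hasDerivAt_pow 2 x).const_mul (-2⁻¹ : ℝ)
    have h2 := h1.exp
    have h3 : HasDerivAt (fun y : ℝ => -y) (-1) x := hasDerivAt_neg x
    have : HasDerivAt (fun y : ℝ => -y * rexp (-2⁻¹ * y ^ 2)) _ x := h3.mul h2
    convert this using 1
    ring
  have htop : Tendsto (fun y : ℝ => -y * rexp (-2⁻¹ * y ^ 2)) atTop (nhds 0) := by
    have := tendsto_mul_exp_halfsq_atTop.neg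
    simpa [neg_mul] using this
  have hbot : Tendsto (fun y : ℝ => -y * rexp (-2⁻¹ * y ^ 2)) atBot (nhds 0) := by
    have h1 := tendsto_mul_exp_halfsq_atTop.comp tendsto_neg_atBot_atTop
    exact h1.congr fun y => by simp [Function.comp, neg_sq]
  have hint : Integrable fun x : ℝ =>
      x ^ 2 * rexp (-2⁻¹ * x ^ 2) - rexp (-2⁻¹ * x ^ 2) :=
    integrable_sq_mul_exp_halfsq.sub integrable_exp_halfsq
  have key := integral_of_hasDerivAt_of_tendsto hderiv hint hbot htop
  rw [sub_zero] at key
  have hsub := integral_sub integrable_sq_mul_exp_halfsq integrable_exp_halfsq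
  rw [key] at hsub
  have hg : ∫ x : ℝ, rexp (-2⁻¹ * x ^ 2) = Real.sqrt (2 * π) := by
    have := integral_gaussian 2⁻¹
    rw [this]
    congr 1
    norm_num
    ring
  linarith [hsub, hg]

/- ### the standard gaussian measure on ℝ via its density -/

lemma pdf_eq (x : ℝ) :
    gaussianPDFReal 0 1 x = (Real.sqrt (2 * π))⁻¹ * rexp (-2⁻¹ * x ^ 2) := by
  simp only [gaussianPDFReal, NNReal.coe_one, mul_one, sub_zero]
  ring_nf

lemma gaussianReal_std_eq :
    gaussianReal 0 1 =
      (volume : Measure ℝ).withDensity fun x => ((gaussianPDFReal 0 1 x).toNNReal : ℝ≥0∞) := by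
  rw [gaussianReal_of_var_ne_zero 0 one_ne_zero]
  rfl

lemma pdf_meas : Measurable fun x => (gaussianPDFReal 0 1 x).toNNReal :=
  (measurable_gaussianPDFReal 0 1).real_toNNReal

lemma integral_gaussianReal_eq (g : ℝ → ℝ) :
    ∫ x, g x ∂(gaussianReal 0 1) = ∫ x, gaussianPDFReal 0 1 x * g x := by
  rw [gaussianReal_std_eq, integral_withDensity_eq_integral_smul pdf_meas]
  congr 1
  funext x
  rw [NNReal.smul_def, smul_eq_mul, Real.coe_toNNReal _ (gaussianPDFReal_nonneg 0 1 x)]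

lemma integrable_gaussianReal_iff {g : ℝ → ℝ} :
    Integrable g (gaussianReal 0 1) ↔
      Integrable (fun x => gaussianPDFReal 0 1 x * g x) volume := by
  rw [gaussianReal_std_eq, integrable_withDensity_iff_integrable_smul pdf_meas]
  constructor <;> intro h <;> refine h.congr (Filter.Eventually.of_forall fun x => ?_) <;>
    · simp only [NNReal.smul_def, smul_eq_mul]
      rw [Real.coe_toNNReal _ (gaussianPDFReal_nonneg 0 1 x)]

lemma integrable_id_gr : Integrable (fun x : ℝ => x) (gaussianReal 0 1) := by
  rw [integrable_gaussianReal_iff]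
  refine (integrable_mul_exp_halfsq.const_mul ((Real.sqrt (2 * π))⁻¹)).congr
    (Filter.Eventually.of_forall fun x => ?_)
  simp only [pdf_eq]
  ring

lemma integral_id_gr : ∫ x, x ∂(gaussianReal 0 1) = 0 := by
  rw [integral_gaussianReal_eq]
  have : ∀ x : ℝ, gaussianPDFReal 0 1 x * x
      = (Real.sqrt (2 * π))⁻¹ * (x * rexp (-2⁻¹ * x ^ 2)) := fun x => by
    simp only [pdf_eq]; ring
  simp_rw [this]
  rw [integral_const_mul, integral_mul_exp_halfsq, mul_zero]

lemma integrable_sq_gr : Integrable (fun x : ℝ => x ^ 2) (gaussianReal 0 1) := by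
  rw [integrable_gaussianReal_iff]
  refine (integrable_sq_mul_exp_halfsq.const_mul ((Real.sqrt (2 * π))⁻¹)).congr
    (Filter.Eventually.of_forall fun x => ?_)
  simp only [pdf_eq]
  ring

lemma integral_sq_gr : ∫ x, x ^ 2 ∂(gaussianReal 0 1) = 1 := by
  rw [integral_gaussianReal_eq]
  have : ∀ x : ℝ, gaussianPDFReal 0 1 x * x ^ 2
      = (Real.sqrt (2 * π))⁻¹ * (x ^ 2 * rexp (-2⁻¹ * x ^ 2)) := fun x => by
    simp only [pdf_eq]; ring
  simp_rw [this]
  rw [integral_const_mul, integral_sq_mul_exp_halfsq]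
  refine inv_mul_cancel₀ ?_
  positivity

/- ### marginals of the standard gaussian -/

lemma stdGaussian_map_eval (n : ℕ) (i : Fin n) :
    (stdGaussian n).map (fun u => u i) = gaussianReal 0 1 := by
  have hm : Measurable (fun u : EuclideanSpace ℝ (Fin n) => u i) := ((measurable_pi_apply i).comp (WithLp.measurable_ofLp 2 (Fin n → ℝ)))
  refine Measure.ext fun s hs => ?_
  rw [Measure.map_apply hm hs]
  show Measure.map (MeasurableEquiv.toLp 2 (Fin n → ℝ)) (Measure.pi fun _ : Fin n => gaussianReal 0 1)
    ((fun u : EuclideanSpace ℝ (Fin n) => u i) ⁻¹' s) = _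
  rw [Measure.map_apply (MeasurableEquiv.toLp 2 (Fin n → ℝ)).measurable (hm hs)]
  show Measure.pi (fun _ : Fin n => gaussianReal 0 1) (Function.eval i ⁻¹' s) = _
  rw [Set.eval_preimage, Measure.pi_pi]
  rw [Finset.prod_eq_single i
    (fun j _ hj => by rw [Function.update_of_ne hj]; exact measure_univ)
    (fun h => absurd (Finset.mem_univ i) h)]
  rw [Function.update_self]

lemma integrable_eval (n : ℕ) (i : Fin n) :
    Integrable (fun u : EuclideanSpace ℝ (Fin n) => u i) (stdGaussian n) := by
  have h : Integrable (fun x : ℝ => x) ((stdGaussian n).map (fun u => u i)) := by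
    rw [stdGaussian_map_eval]; exact integrable_id_gr
  exact (integrable_map_measure aestronglyMeasurable_id
    ((measurable_pi_apply i).comp (WithLp.measurable_ofLp 2 (Fin n → ℝ))).aemeasurable).mp h

lemma integral_eval (n : ℕ) (i : Fin n) :
    ∫ u, u i ∂(stdGaussian n) = 0 := by
  have h := integral_map (μ := stdGaussian n) (φ := fun u : EuclideanSpace ℝ (Fin n) => u i)
    (f := fun x : ℝ => x) ((measurable_pi_apply i).comp (WithLp.measurable_ofLp 2 (Fin n → ℝ))).aemeasurable aestronglyMeasurable_id
  rw [stdGaussian_map_eval, integral_id_gr] at h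
  exact h.symm

lemma integrable_eval_sq (n : ℕ) (i : Fin n) :
    Integrable (fun u : EuclideanSpace ℝ (Fin n) => u i ^ 2) (stdGaussian n) := by
  have h : Integrable (fun x : ℝ => x ^ 2) ((stdGaussian n).map (fun u => u i)) := by
    rw [stdGaussian_map_eval]; exact integrable_sq_gr
  exact (integrable_map_measure (continuous_pow 2).aestronglyMeasurable
    ((measurable_pi_apply i).comp (WithLp.measurable_ofLp 2 (Fin n → ℝ))).aemeasurable).mp h

lemma integral_eval_sq (n : ℕ) (i : Fin n) :
    ∫ u, u i ^ 2 ∂(stdGaussian n) = 1 := by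
  have h := integral_map (μ := stdGaussian n) (φ := fun u : EuclideanSpace ℝ (Fin n) => u i)
    (f := fun x : ℝ => x ^ 2) ((measurable_pi_apply i).comp (WithLp.measurable_ofLp 2 (Fin n → ℝ))).aemeasurable
    (continuous_pow 2).aestronglyMeasurable
  rw [stdGaussian_map_eval, integral_sq_gr] at h
  exact h.symm

/- ### moments of the norm -/

lemma norm_sq_eq {n : ℕ} (u : EuclideanSpace ℝ (Fin n)) : ‖u‖ ^ 2 = ∑ i, u i ^ 2 := by
  rw [EuclideanSpace.norm_eq, Real.sq_sqrt (Finset.sum_nonneg fun i _ => sq_nonneg _)]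
  simp [Real.norm_eq_abs, sq_abs]

lemma integrable_norm (n : ℕ) :
    Integrable (fun u : EuclideanSpace ℝ (Fin n) => ‖u‖) (stdGaussian n) := by
  have hsum : Integrable (fun u : EuclideanSpace ℝ (Fin n) => ∑ i, |u i|) (stdGaussian n) :=
    integrable_finset_sum _ fun i _ => (integrable_eval n i).abs
  refine hsum.mono' continuous_norm.aestronglyMeasurable (Filter.Eventually.of_forall fun u => ?_)
  rw [norm_norm]
  have h1 : ‖u‖ ^ 2 ≤ (∑ i, |u i|) ^ 2 := by
    rw [norm_sq_eq]
    calc ∑ i, u i ^ 2 = ∑ i, |u i| ^ 2 := by simp [sq_abs]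
      _ ≤ (∑ i, |u i|) ^ 2 := Finset.sum_sq_le_sq_sum_of_nonneg fun i _ => abs_nonneg _
  have := Real.sqrt_le_sqrt h1
  rwa [Real.sqrt_sq (norm_nonneg _),
    Real.sqrt_sq (Finset.sum_nonneg fun i _ => abs_nonneg _)] at this

lemma integrable_norm_sq (n : ℕ) :
    Integrable (fun u : EuclideanSpace ℝ (Fin n) => ‖u‖ ^ 2) (stdGaussian n) :=
  (integrable_finset_sum _ fun i _ => integrable_eval_sq n i).congr
    (Filter.Eventually.of_forall fun u => (norm_sq_eq u).symm)

lemma integral_norm_sq (n : ℕ) :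
    ∫ u, ‖u‖ ^ 2 ∂(stdGaussian n) = n := by
  calc ∫ u, ‖u‖ ^ 2 ∂(stdGaussian n) = ∫ u, ∑ i, u i ^ 2 ∂(stdGaussian n) :=
        integral_congr_ae (Filter.Eventually.of_forall fun u => norm_sq_eq u)
    _ = ∑ i : Fin n, ∫ u, u i ^ 2 ∂(stdGaussian n) :=
        integral_finset_sum _ fun i _ => integrable_eval_sq n i
    _ = n := by simp [integral_eval_sq]

lemma integral_norm_le (n : ℕ) :
    ∫ u, ‖u‖ ∂(stdGaussian n) ≤ Real.sqrt n := by
  have hjen := (Even.convexOn_pow (even_two : Even 2)).map_integral_le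
    (continuous_pow 2).continuousOn isClosed_univ
    (Filter.Eventually.of_forall fun u => Set.mem_univ _) (integrable_norm n)
    ((integrable_norm_sq n) : Integrable ((fun y : ℝ => y ^ 2) ∘ fun u => ‖u‖) _)
  have h1 : (∫ u, ‖u‖ ∂(stdGaussian n)) ^ 2 ≤ (n : ℝ) := by
    calc (∫ u, ‖u‖ ∂(stdGaussian n)) ^ 2 ≤ ∫ u, ‖u‖ ^ 2 ∂(stdGaussian n) := hjen
      _ = n := integral_norm_sq n
  have h2 : 0 ≤ ∫ u, ‖u‖ ∂(stdGaussian n) := integral_nonneg fun u => norm_nonneg _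
  exact (Real.le_sqrt h2 (Nat.cast_nonneg n)).mpr h1

/- ### mean of the standard gaussian -/

lemma integrable_id (n : ℕ) :
    Integrable (fun u : EuclideanSpace ℝ (Fin n) => u) (stdGaussian n) :=
  (integrable_norm_iff aestronglyMeasurable_id).mp (integrable_norm n)

lemma integral_id_eq_zero (n : ℕ) :
    ∫ u, u ∂(stdGaussian n) = (0 : EuclideanSpace ℝ (Fin n)) := by
  refine PiLp.ext fun i => ?_
  have h := (EuclideanSpace.proj i (𝕜 := ℝ)).integral_comp_comm (integrable_id n)
  have h2 : ∫ u, u i ∂(stdGaussian n)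
      = (∫ u, u ∂(stdGaussian n)) i := h
  rw [integral_eval n i] at h2
  exact h2.symm

end GaussAux

theorem gaussian_smoothing_bounds (n : ℕ) (f : EuclideanSpace ℝ (Fin n) → ℝ) (L : ℝ)
    (hconv : ConvexOn ℝ Set.univ f)
    (hlip : ∀ x y, |f x - f y| ≤ L * ‖x - y‖)
    (x : EuclideanSpace ℝ (Fin n)) (μ : ℝ) (hμ : 0 < μ) :
    f x ≤ (∫ u, f (x + μ • u) ∂ stdGaussian n) ∧
    (∫ u, f (x + μ • u) ∂ stdGaussian n) ≤ f x + μ * L * Real.sqrt n := by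
  rcases Nat.eq_zero_or_pos n with hn | hn
  · subst hn
    have h0 : (fun u : EuclideanSpace ℝ (Fin 0) => f (x + μ • u)) = fun _ => f x := by
      funext u
      have : u = 0 := PiLp.ext fun i => i.elim0
      rw [this]
      simp
    rw [h0, integral_const, probReal_univ, one_smul]
    refine ⟨le_refl _, ?_⟩
    simp
  · have hL : 0 ≤ L := by
      have h := hlip (EuclideanSpace.single ⟨0, hn⟩ (1:ℝ)) 0
      rw [sub_zero, EuclideanSpace.norm_single] at h
      have := (abs_nonneg (f (EuclideanSpace.single ⟨0, hn⟩ (1:ℝ)) - f 0)).trans h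
      simpa using this
    have hcont : Continuous f := by
      have hl : LipschitzWith (Real.nnabs L) f := by
        refine LipschitzWith.of_dist_le_mul fun a b => ?_
        rw [Real.dist_eq, dist_eq_norm, Real.coe_nnabs]
        calc |f a - f b| ≤ L * ‖a - b‖ := hlip a b
          _ ≤ |L| * ‖a - b‖ :=
            mul_le_mul_of_nonneg_right (le_abs_self L) (norm_nonneg _)
      exact hl.continuous
    have hsm : Integrable (fun u : EuclideanSpace ℝ (Fin n) => μ • u) (stdGaussian n) :=
      (GaussAux.integrable_id n).smul μ
    have haff : Integrable (fun u : EuclideanSpace ℝ (Fin n) => x + μ • u) (stdGaussian n) :=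
      (integrable_const x).add hsm
    have hbound : ∀ u : EuclideanSpace ℝ (Fin n),
        |f (x + μ • u) - f x| ≤ L * (μ * ‖u‖) := fun u => by
      have h := hlip (x + μ • u) x
      simpa [norm_smul, abs_of_pos hμ, mul_assoc] using h
    have hIntB : Integrable
        (fun u : EuclideanSpace ℝ (Fin n) => |f x| + L * (μ * ‖u‖)) (stdGaussian n) :=
      (integrable_const _).add (((GaussAux.integrable_norm n).const_mul μ).const_mul L)
    have hIntB2 : Integrable
        (fun u : EuclideanSpace ℝ (Fin n) => f x + L * (μ * ‖u‖)) (stdGaussian n) :=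
      (integrable_const _).add (((GaussAux.integrable_norm n).const_mul μ).const_mul L)
    have hInt_g : Integrable (fun u : EuclideanSpace ℝ (Fin n) => f (x + μ • u))
        (stdGaussian n) := by
      refine hIntB.mono'
        ((hcont.comp (continuous_const.add (continuous_const_smul μ))).aestronglyMeasurable)
        (Filter.Eventually.of_forall fun u => ?_)
      rw [Real.norm_eq_abs]
      calc |f (x + μ • u)| = |f x + (f (x + μ • u) - f x)| := by congr 1; ring
        _ ≤ |f x| + |f (x + μ • u) - f x| := abs_add_le _ _
        _ ≤ |f x| + L * (μ * ‖u‖) := add_le_add_right (hbound u) _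
    have hmean : ∫ u, (x + μ • u) ∂(stdGaussian n) = x := by
      rw [integral_add (integrable_const _) hsm,
        integral_const, probReal_univ, one_smul, integral_smul,
        GaussAux.integral_id_eq_zero, smul_zero, add_zero]
    have hjen := hconv.map_integral_le hcont.continuousOn isClosed_univ
      (Filter.Eventually.of_forall fun u => Set.mem_univ _) haff
      (hInt_g : Integrable (f ∘ fun u => x + μ • u) _)
    rw [hmean] at hjen
    have hup : ∫ u, f (x + μ • u) ∂(stdGaussian n)
        ≤ f x + L * (μ * ∫ u, ‖u‖ ∂(stdGaussian n)) := by
      have hm := integral_mono hInt_g hIntB2 fun u => by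
        have h1 := (le_abs_self (f (x + μ • u) - f x)).trans (hbound u)
        linarith
      rw [integral_add (integrable_const _)
        (((GaussAux.integrable_norm n).const_mul μ).const_mul L),
        integral_const, probReal_univ, one_smul,
        integral_const_mul, integral_const_mul] at hm
      exact hm
    have h1 : ∫ u, ‖u‖ ∂(stdGaussian n) ≤ Real.sqrt n := GaussAux.integral_norm_le n
    have h2 : 0 ≤ ∫ u, ‖u‖ ∂(stdGaussian n) := integral_nonneg fun u => norm_nonneg _
    refine ⟨hjen, hup.trans ?_⟩
    have : L * (μ * ∫ u, ‖u‖ ∂(stdGaussian n)) ≤ μ * L * Real.sqrt n := by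
      calc L * (μ * ∫ u, ‖u‖ ∂(stdGaussian n)) ≤ L * (μ * Real.sqrt n) :=
            mul_le_mul_of_nonneg_left (mul_le_mul_of_nonneg_left h1 hμ.le) hL
        _ = μ * L * Real.sqrt n := by ring
    linarith
end

section
/- Let P ∈ R^{n×d} with d ≤ n be a random matrix with i.i.d. standard Gaussian entries. Then for any fixed x ∈ R^n, E[||P P^T x||^2] ≤ 2(n+4)(d+4)||x||^2. -/
open MeasureTheory ProbabilityTheory Real Matrix
open Filter
open scoped ENNReal NNReal

noncomputable def Iexp (k : ℕ) : ℝ := ∫ x : ℝ, x ^ k * Real.exp (-(1/2) * x ^ 2)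

lemma integrable_pow_gauss (k : ℕ) :
    Integrable (fun x : ℝ => x ^ k * Real.exp (-(1/2) * x ^ 2)) := by
  have h := integrable_rpow_mul_exp_neg_mul_sq (b := 1/2) (by norm_num)
    (s := (k : ℝ)) (lt_of_lt_of_le (by norm_num) (Nat.cast_nonneg k))
  simpa [Real.rpow_natCast] using h

lemma tendsto_gauss_atTop : Tendsto (fun x : ℝ => Real.exp (-(1/2) * x ^ 2)) atTop (nhds 0) := by
  apply Real.tendsto_exp_atBot.comp
  have h : Tendsto (fun x : ℝ => x ^ 2) atTop atTop := tendsto_pow_atTop (by norm_num)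
  have := h.const_mul_atTop_of_neg (r := -(1/2)) (by norm_num)
  simpa using this

lemma tendsto_gauss_atBot : Tendsto (fun x : ℝ => Real.exp (-(1/2) * x ^ 2)) atBot (nhds 0) := by
  have h : Tendsto (fun x : ℝ => -x) atBot atTop := tendsto_neg_atBot_atTop
  have := tendsto_gauss_atTop.comp h
  simpa [Function.comp_def, neg_sq] using this

lemma hasDerivAt_gauss (x : ℝ) :
    HasDerivAt (fun x : ℝ => -Real.exp (-(1/2) * x ^ 2)) (x * Real.exp (-(1/2) * x ^ 2)) x := by
  have h1 : HasDerivAt (fun x : ℝ => -(1/2) * x ^ 2) (-(1/2) * (2 * x ^ 1)) x :=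
    (hasDerivAt_pow 2 x).const_mul _
  have h2 : HasDerivAt (fun x : ℝ => -Real.exp (-(1/2) * x ^ 2))
      (-(Real.exp (-(1/2) * x ^ 2) * (-(1/2) * (2 * x ^ 1)))) x := (h1.exp).neg
  convert h2 using 1
  ring

lemma Iexp_one : Iexp 1 = 0 := by
  have h := integral_of_hasDerivAt_of_tendsto (m := -(0:ℝ)) (n := -(0:ℝ))
    (fun x => hasDerivAt_gauss x) (by simpa [pow_one] using integrable_pow_gauss 1)
    (by simpa using tendsto_gauss_atBot.neg) (by simpa using tendsto_gauss_atTop.neg)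
  simpa [Iexp, pow_one] using h


lemma integ_congr {f g : ℝ → ℝ} (h : ∀ x, f x = g x) (hf : Integrable f) :
    Integrable g := funext h ▸ hf

lemma Iexp_zero : Iexp 0 = Real.sqrt (2 * π) := by
  have h := integral_gaussian (1/2)
  simp only [Iexp, pow_zero, one_mul, neg_mul] at h ⊢
  rw [h, show π / (1/2) = 2 * π by ring]

lemma Iexp_rec (k : ℕ) : Iexp (k + 2) = (k + 1) * Iexp k := by
  have h := integral_mul_deriv_eq_deriv_mul_of_integrable
    (u := fun x : ℝ => x ^ (k+1)) (u' := fun x : ℝ => ((k:ℝ)+1) * x ^ k)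
    (v := fun x : ℝ => -Real.exp (-(1/2) * x ^ 2))
    (v' := fun x : ℝ => x * Real.exp (-(1/2) * x ^ 2))
    (fun x _ => by simpa using hasDerivAt_pow (k+1) x)
    (fun x _ => hasDerivAt_gauss x)
    (integ_congr (fun x => by simp only [Pi.mul_apply]; ring) (integrable_pow_gauss (k+2)))
    (integ_congr (fun x => by simp only [Pi.mul_apply]; ring)
      ((integrable_pow_gauss k).const_mul (-((k:ℝ)+1))))
    (integ_congr (fun x => by simp only [Pi.mul_apply]; ring)
      ((integrable_pow_gauss (k+1)).const_mul (-1)))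
  have e1 : ∀ x : ℝ, x ^ (k+1) * (x * Real.exp (-(1/2) * x ^ 2))
      = x ^ (k+2) * Real.exp (-(1/2) * x ^ 2) := fun x => by ring
  simp only [e1] at h
  rw [Iexp, h, Iexp, ← integral_neg, ← integral_const_mul]
  congr 1
  funext x
  ring

noncomputable def gmom (k : ℕ) : ℝ := ∫ t : ℝ, t ^ k ∂(gaussianReal 0 1)

lemma integral_gaussianReal_eq (f : ℝ → ℝ) :
    ∫ t, f t ∂(gaussianReal 0 1)
      = ∫ t : ℝ, f t * ((Real.sqrt (2 * π))⁻¹ * Real.exp (-(1/2) * t ^ 2)) := by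
  rw [gaussianReal_of_var_ne_zero 0 one_ne_zero]
  have hmeas : Measurable fun t : ℝ => (gaussianPDFReal 0 1 t).toNNReal :=
    (measurable_gaussianPDFReal 0 1).real_toNNReal
  have hd : gaussianPDF 0 1 = fun t => ((gaussianPDFReal 0 1 t).toNNReal : ℝ≥0∞) := by
    funext t; simp [gaussianPDF, ENNReal.ofReal]
  rw [hd, integral_withDensity_eq_integral_smul hmeas]
  congr 1
  funext t
  have hnn : 0 ≤ gaussianPDFReal 0 1 t := gaussianPDFReal_nonneg 0 1 t
  rw [NNReal.smul_def, smul_eq_mul, Real.coe_toNNReal _ hnn]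
  rw [mul_comm]
  congr 1
  rw [gaussianPDFReal]
  have h1 : 2 * π * ((1:ℝ≥0):ℝ) = 2 * π := by norm_num
  have h2 : -(t - 0)^2/(2 * ((1:ℝ≥0):ℝ)) = -(1/2) * t^2 := by push_cast; ring
  rw [h1, h2]


lemma sqrt2pi_pos : (0:ℝ) < Real.sqrt (2 * π) := Real.sqrt_pos.2 (by positivity)

lemma gmom_eq (k : ℕ) : gmom k = (Real.sqrt (2 * π))⁻¹ * Iexp k := by
  rw [gmom, integral_gaussianReal_eq (fun t => t ^ k), Iexp, ← integral_const_mul]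
  congr 1; funext t; ring

lemma gmom_zero : gmom 0 = 1 := by
  rw [gmom_eq, Iexp_zero, inv_mul_cancel₀ sqrt2pi_pos.ne']

lemma gmom_one : gmom 1 = 0 := by rw [gmom_eq, Iexp_one, mul_zero]

lemma gmom_two : gmom 2 = 1 := by
  have h := Iexp_rec 0
  rw [gmom_eq, show (2:ℕ) = 0 + 2 from rfl, h, Iexp_zero]
  push_cast
  rw [show ((0:ℝ) + 1) * Real.sqrt (2*π) = Real.sqrt (2*π) by ring,
    inv_mul_cancel₀ sqrt2pi_pos.ne']

lemma gmom_three : gmom 3 = 0 := by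
  have h := Iexp_rec 1
  rw [gmom_eq, show (3:ℕ) = 1 + 2 from rfl, h, Iexp_one, mul_zero, mul_zero]

lemma gmom_four : gmom 4 = 3 := by
  have h2 := Iexp_rec 0
  have h4 := Iexp_rec 2
  rw [gmom_eq, show (4:ℕ) = 2 + 2 from rfl, h4, show Iexp 2 = Iexp (0 + 2) from rfl, h2, Iexp_zero]
  push_cast
  field_simp
  ring

lemma integrable_pow_gaussianReal (k : ℕ) :
    Integrable (fun t : ℝ => t ^ k) (gaussianReal 0 1) := by
  rw [gaussianReal_of_var_ne_zero 0 one_ne_zero]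
  have hmeas : Measurable fun t : ℝ => (gaussianPDFReal 0 1 t).toNNReal :=
    (measurable_gaussianPDFReal 0 1).real_toNNReal
  have hd : gaussianPDF 0 1 = fun t => ((gaussianPDFReal 0 1 t).toNNReal : ℝ≥0∞) := by
    funext t; simp [gaussianPDF, ENNReal.ofReal]
  rw [hd, integrable_withDensity_iff_integrable_smul hmeas]
  apply integ_congr (f := fun t : ℝ => ((Real.sqrt (2*π))⁻¹) * (t ^ k * Real.exp (-(1/2) * t^2)))
  · intro t
    have hnn : 0 ≤ gaussianPDFReal 0 1 t := gaussianPDFReal_nonneg 0 1 t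
    rw [NNReal.smul_def, smul_eq_mul, Real.coe_toNNReal _ hnn, gaussianPDFReal]
    have h1 : 2 * π * ((1:ℝ≥0):ℝ) = 2 * π := by norm_num
    have h2 : -(t - 0)^2/(2 * ((1:ℝ≥0):ℝ)) = -(1/2) * t^2 := by push_cast; ring
    rw [h1, h2]
    ring
  · exact (integrable_pow_gauss k).const_mul _


noncomputable def gaussMatrix (n d : ℕ) : Measure (Fin n → Fin d → ℝ) :=
  Measure.pi fun _ : Fin n => Measure.pi fun _ : Fin d => gaussianReal 0 1

section PiLemmas

noncomputable local instance gaussRealSpace : MeasureSpace ℝ := ⟨gaussianReal 0 1⟩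

local instance : SigmaFinite (volume : Measure ℝ) :=
  inferInstanceAs (SigmaFinite (gaussianReal 0 1))

local instance sfPiG (d : ℕ) : SigmaFinite (volume : Measure (Fin d → ℝ)) := by
  have : IsProbabilityMeasure (volume : Measure (Fin d → ℝ)) := by
    rw [show (volume : Measure (Fin d → ℝ)) = Measure.pi fun _ => gaussianReal 0 1 from rfl]
    infer_instance
  infer_instance

lemma gaussMatrix_integral_prod (n d : ℕ) (f : Fin n → Fin d → ℝ → ℝ) :
    ∫ P, ∏ a, ∏ b, f a b (P a b) ∂(gaussMatrix n d)
      = ∏ a, ∏ b, ∫ t, f a b t ∂(gaussianReal 0 1) := by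
  have h0 : gaussMatrix n d = (volume : Measure (Fin n → Fin d → ℝ)) := rfl
  rw [h0]
  rw [show (volume : Measure (Fin n → Fin d → ℝ)) = Measure.pi fun _ => volume from rfl,
    MeasureTheory.integral_fintype_prod_eq_prod
    (fun a (r : Fin d → ℝ) => ∏ b, f a b (r b))]
  congr 1
  funext a
  exact MeasureTheory.integral_fintype_prod_eq_prod (fun b t => f a b t)

lemma gaussMatrix_integrable_prod (n d : ℕ) (f : Fin n → Fin d → ℝ → ℝ)
    (hf : ∀ a b, Integrable (f a b) (gaussianReal 0 1)) :
    Integrable (fun P => ∏ a, ∏ b, f a b (P a b)) (gaussMatrix n d) := by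
  have h0 : gaussMatrix n d = (volume : Measure (Fin n → Fin d → ℝ)) := rfl
  rw [h0]
  exact MeasureTheory.Integrable.fintype_prod
    (f := fun a (r : Fin d → ℝ) => ∏ b, f a b (r b))
    (fun a => MeasureTheory.Integrable.fintype_prod (fun b => hf a b))

end PiLemmas


section Delta

variable {α : Type*} [Fintype α] [DecidableEq α]

def e4 (q1 q2 q3 q4 p : α) : ℕ :=
  (if p = q1 then 1 else 0) + (if p = q2 then 1 else 0)
    + (if p = q3 then 1 else 0) + (if p = q4 then 1 else 0)

lemma prod_pow_e4 (y : α → ℝ) (q1 q2 q3 q4 : α) :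
    ∏ p, y p ^ e4 q1 q2 q3 q4 p = y q1 * y q2 * y q3 * y q4 := by
  simp only [e4, pow_add, pow_ite, pow_one, pow_zero, Finset.prod_mul_distrib,
    Finset.prod_ite_eq', Finset.mem_univ, if_true]

lemma prod_gmom_single (q1 q2 q3 q4 p0 : α) (h : e4 q1 q2 q3 q4 p0 = 1) :
    ∏ p, gmom (e4 q1 q2 q3 q4 p) = 0 :=
  Finset.prod_eq_zero (Finset.mem_univ p0) (by rw [h, gmom_one])

lemma prod_gmom_all_eq (q : α) : ∏ p, gmom (e4 q q q q p) = 3 := by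
  have h : ∀ p, gmom (e4 q q q q p) = if p = q then (3:ℝ) else 1 := by
    intro p
    by_cases hp : p = q
    · simp [e4, hp, gmom_four]
    · simp [e4, hp, gmom_zero]
  rw [Finset.prod_congr rfl (fun p _ => h p)]
  simp [Finset.prod_ite_eq']

lemma prod_gmom_two_pairs (q r : α) (h : q ≠ r) :
    ∏ p, gmom (e4 q q r r p) = 1 := by
  have hh : ∀ p, gmom (e4 q q r r p) = 1 := by
    intro p
    by_cases hp : p = q
    · simp [e4, hp, h, h.symm, gmom_two]
    · by_cases hq : p = r
      · simp [e4, hp, hq, h, h.symm, gmom_two]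
      · simp [e4, hp, hq, gmom_zero]
  rw [Finset.prod_congr rfl (fun p _ => hh p)]
  simp

lemma e4_comm_pairs (q r : α) : e4 q r q r = e4 q q r r := by
  funext p; simp only [e4]; ring

end Delta


lemma integ_congr' {β : Type*} [MeasurableSpace β] {μ : Measure β} {f g : β → ℝ}
    (h : ∀ x, f x = g x) (hf : Integrable f μ) : Integrable g μ := funext h ▸ hf

lemma mono_eq_prod {n d : ℕ} (i j j' : Fin n) (k k' : Fin d) (P : Fin n → Fin d → ℝ) :
    P i k * P j k * P i k' * P j' k'
      = ∏ a, ∏ b, (P a b) ^ (e4 (i,k) (j,k) (i,k') (j',k') (a,b)) := by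
  rw [← Fintype.prod_prod_type' (f := fun a b =>
    (P a b) ^ (e4 (i,k) (j,k) (i,k') (j',k') (a,b)))]
  exact (prod_pow_e4 (fun p : Fin n × Fin d => P p.1 p.2) (i,k) (j,k) (i,k') (j',k')).symm

lemma mono_integrable {n d : ℕ} (i j j' : Fin n) (k k' : Fin d) :
    Integrable (fun P => P i k * P j k * P i k' * P j' k') (gaussMatrix n d) := by
  have h := gaussMatrix_integrable_prod n d
    (fun a b t => t ^ (e4 (i,k) (j,k) (i,k') (j',k') (a,b)))
    (fun a b => integrable_pow_gaussianReal _)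
  exact integ_congr' (fun P => (mono_eq_prod i j j' k k' P).symm) h

lemma mono_integral {n d : ℕ} (i j j' : Fin n) (k k' : Fin d) :
    ∫ P, P i k * P j k * P i k' * P j' k' ∂(gaussMatrix n d)
      = ∏ p : Fin n × Fin d, gmom (e4 (i,k) (j,k) (i,k') (j',k') p) := by
  simp_rw [mono_eq_prod i j j' k k']
  rw [gaussMatrix_integral_prod n d (fun a b t => t ^ (e4 (i,k) (j,k) (i,k') (j',k') (a,b)))]
  rw [← Fintype.prod_prod_type' (f := fun a b =>
    ∫ t, t ^ (e4 (i,k) (j,k) (i,k') (j',k') (a,b)) ∂(gaussianReal 0 1))]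
  rfl


lemma T_val {n d : ℕ} (i j j' : Fin n) (k k' : Fin d) :
    ∏ p : Fin n × Fin d, gmom (e4 (i,k) (j,k) (i,k') (j',k') p)
      = (if i = j then (1:ℝ) else 0) * (if i = j' then 1 else 0)
        + (if k = k' then 1 else 0) * (if j = j' then 1 else 0)
        + (if i = j ∧ i = j' ∧ k = k' then (1:ℝ) else 0) := by
  by_cases hij : i = j
  · subst hij
    by_cases hij' : i = j'
    · subst hij'
      by_cases hkk : k = k'
      · subst hkk
        rw [prod_gmom_all_eq (i,k)]
        simp
        norm_num
      · rw [prod_gmom_two_pairs (i,k) (i,k') (by simp [Prod.ext_iff, hkk])]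
        simp [hkk]
    · rw [prod_gmom_single _ _ _ _ ((j',k'))
        (by simp [e4, Prod.mk.injEq, Ne.symm hij'])]
      simp [hij']
  · by_cases hjj' : j = j'
    · subst hjj'
      by_cases hkk : k = k'
      · subst hkk
        rw [e4_comm_pairs (i,k) (j,k),
          prod_gmom_two_pairs (i,k) (j,k) (by simp [Prod.ext_iff, hij])]
        simp [hij]
      · rw [prod_gmom_single _ _ _ _ ((j,k))
          (by simp [e4, Prod.mk.injEq, Ne.symm hij, hkk])]
        simp [hij, hkk]
    · rw [prod_gmom_single _ _ _ _ ((j,k))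
        (by simp [e4, Prod.mk.injEq, Ne.symm hij, hjj'])]
      simp [hij, hjj']


lemma delta_sum_eval (n d : ℕ) (x : Fin n → ℝ) :
    (∑ i : Fin n, ∑ j : Fin n, ∑ j' : Fin n, ∑ k : Fin d, ∑ k' : Fin d, (x j * x j') *
            ((if i = j then (1:ℝ) else 0) * (if i = j' then (1:ℝ) else 0)
              + (if k = k' then (1:ℝ) else 0) * (if j = j' then (1:ℝ) else 0)
              + (if i = j ∧ i = j' ∧ k = k' then (1:ℝ) else 0)))
      = ((d:ℝ)*d + n*d + d) * ∑ i, x i ^ 2 := by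
  simp [mul_add, Finset.sum_add_distrib, mul_ite, ite_mul, mul_zero, zero_mul, mul_one,
    ite_and, Finset.sum_ite_eq, Finset.sum_const, Finset.card_univ, Finset.mul_sum,
    Finset.sum_mul, pow_two]
  ring_nf
  rw [← Finset.sum_add_distrib, ← Finset.sum_add_distrib]
  exact Finset.sum_congr rfl (fun i _ => by ring)

theorem gaussian_PPt_bound (n d : ℕ) (hdn : d ≤ n) (x : Fin n → ℝ) :
    (∫ P, ∑ i, (((Matrix.of P) * (Matrix.of P)ᵀ).mulVec x i) ^ 2 ∂ gaussMatrix n d)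
      ≤ 2 * ((n : ℝ) + 4) * ((d : ℝ) + 4) * ∑ i, (x i) ^ 2 := by
  have expand : ∀ P : Fin n → Fin d → ℝ,
      (∑ i, (((Matrix.of P) * (Matrix.of P)ᵀ).mulVec x i) ^ 2)
        = ∑ i, ∑ j, ∑ j', ∑ k, ∑ k',
            (x j * x j') * (P i k * P j k * P i k' * P j' k') := by
    intro P
    refine Finset.sum_congr rfl (fun i _ => ?_)
    have h1 : (((Matrix.of P) * (Matrix.of P)ᵀ).mulVec x) i
        = ∑ j, (∑ k, P i k * P j k) * x j := by
      simp [Matrix.mulVec, dotProduct, Matrix.mul_apply, Matrix.transpose_apply]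
    rw [h1, pow_two, Finset.sum_mul_sum]
    refine Finset.sum_congr rfl (fun j _ => ?_)
    refine Finset.sum_congr rfl (fun j' _ => ?_)
    have h2 : ((∑ k, P i k * P j k) * x j) * ((∑ k', P i k' * P j' k') * x j')
        = (x j * x j') * ((∑ k, P i k * P j k) * (∑ k', P i k' * P j' k')) := by ring
    rw [h2, Finset.sum_mul_sum, Finset.mul_sum]
    refine Finset.sum_congr rfl (fun k _ => ?_)
    rw [Finset.mul_sum]
    refine Finset.sum_congr rfl (fun k' _ => ?_)
    ring
  have int1 : ∀ (i j j' : Fin n) (k k' : Fin d),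
      Integrable (fun P => (x j * x j') * (P i k * P j k * P i k' * P j' k'))
        (gaussMatrix n d) := fun i j j' k k' => (mono_integrable i j j' k k').const_mul _
  rw [show (fun P : Fin n → Fin d → ℝ =>
      ∑ i, (((Matrix.of P) * (Matrix.of P)ᵀ).mulVec x i) ^ 2)
    = fun P => ∑ i, ∑ j, ∑ j', ∑ k, ∑ k',
        (x j * x j') * (P i k * P j k * P i k' * P j' k') from funext expand]
  rw [integral_finset_sum _ (fun i _ => integrable_finset_sum _ (fun j _ =>
    integrable_finset_sum _ (fun j' _ => integrable_finset_sum _ (fun k _ =>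
    integrable_finset_sum _ (fun k' _ => int1 i j j' k k')))))]
  have swap : ∀ i : Fin n,
      (∫ P, ∑ j, ∑ j', ∑ k, ∑ k', (x j * x j') *
          (P i k * P j k * P i k' * P j' k') ∂(gaussMatrix n d))
        = ∑ j, ∑ j', ∑ k : Fin d, ∑ k' : Fin d, (x j * x j') *
            ((if i = j then (1:ℝ) else 0) * (if i = j' then (1:ℝ) else 0)
              + (if k = k' then (1:ℝ) else 0) * (if j = j' then (1:ℝ) else 0)
              + (if i = j ∧ i = j' ∧ k = k' then (1:ℝ) else 0)) := by
    intro i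
    rw [integral_finset_sum _ (fun j _ => integrable_finset_sum _ (fun j' _ =>
      integrable_finset_sum _ (fun k _ =>
      integrable_finset_sum _ (fun k' _ => int1 i j j' k k'))))]
    refine Finset.sum_congr rfl (fun j _ => ?_)
    rw [integral_finset_sum _ (fun j' _ => integrable_finset_sum _ (fun k _ =>
      integrable_finset_sum _ (fun k' _ => int1 i j j' k k')))]
    refine Finset.sum_congr rfl (fun j' _ => ?_)
    rw [integral_finset_sum _ (fun k _ =>
      integrable_finset_sum _ (fun k' _ => int1 i j j' k k'))]
    refine Finset.sum_congr rfl (fun k _ => ?_)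
    rw [integral_finset_sum _ (fun k' _ => int1 i j j' k k')]
    refine Finset.sum_congr rfl (fun k' _ => ?_)
    rw [integral_const_mul, mono_integral, T_val]
  simp only [swap]
  rw [delta_sum_eval n d x]
  have hS : (0:ℝ) ≤ ∑ i, x i ^ 2 := Finset.sum_nonneg (fun i _ => sq_nonneg _)
  have hdn' : (d:ℝ) ≤ n := Nat.cast_le.2 hdn
  have hd0 : (0:ℝ) ≤ d := Nat.cast_nonneg d
  have hn0 : (0:ℝ) ≤ n := Nat.cast_nonneg n
  nlinarith [mul_nonneg (mul_nonneg hn0 hd0) hS, mul_nonneg hd0 hS, mul_nonneg hn0 hS,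
    mul_nonneg (mul_nonneg hd0 hd0) hS,
    mul_le_mul_of_nonneg_right (mul_le_mul_of_nonneg_right hdn' hd0) hS]
end
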